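/- For a, b, t > 0 with a ≠ b, one has |b·e^{-at} - a·e^{-bt} - (b - a)| ≤ C · min(1, 2ab·t²) · |b - a| for some absolute constant C ≥ 1. -/

import Mathlib

private noncomputable def q4 (z : ℝ) : ℝ := (Real.exp (-z) - 1) / z

private lemma q4_hasDeriv {z : ℝ} (hz : z ≠ 0) :
    HasDerivAt q4 ((1 - (1 + z) * Real.exp (-z)) / z ^ 2) z := by
  have h1 : HasDerivAt (fun z : ℝ => Real.exp (-z) - 1) (-Real.exp (-z)) z := by
    have := (Real.hasDerivAt_exp (-z)).comp z ((hasDerivAt_id z).neg)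
    simpa using this.sub_const 1
  have := h1.div (hasDerivAt_id z) hz
  refine this.congr_deriv ?_
  simp only [id]
  field_simp
  ring

private lemma aux_S {z : ℝ} (hz : 0 ≤ z) : 1 - z ^ 2 / 2 ≤ (1 + z) * Real.exp (-z) := by
  set p : ℝ → ℝ := fun z => (1 + z) * Real.exp (-z) + z ^ 2 / 2 with hp
  have hderiv : ∀ w : ℝ, HasDerivAt p (w * (1 - Real.exp (-w))) w := by
    intro w
    have he : HasDerivAt (fun z : ℝ => Real.exp (-z)) (-Real.exp (-w)) w := by
      simpa [Function.comp_def] using (Real.hasDerivAt_exp (-w)).comp w ((hasDerivAt_id w).neg)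
    have h1 := ((hasDerivAt_const w (1:ℝ)).add (hasDerivAt_id w)).mul he
    simp only [id_eq, zero_add] at h1
    have h2 : HasDerivAt (fun z : ℝ => z ^ 2 / 2) w w := by
      simpa using (hasDerivAt_pow 2 w).div_const 2
    refine (h1.add h2).congr_deriv ?_
    simp only [Pi.add_apply, id]
    ring
  have hmono : Monotone p := by
    apply monotone_of_deriv_nonneg (fun w => (hderiv w).differentiableAt)
    intro w
    rw [(hderiv w).deriv]
    rcases le_or_gt 0 w with h | h
    · have : Real.exp (-w) ≤ 1 := Real.exp_le_one_iff.mpr (by linarith)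
      nlinarith
    · have : 1 ≤ Real.exp (-w) := Real.one_le_exp (by linarith)
      nlinarith
  have := hmono hz
  simp only [hp] at this
  simp only [neg_zero, Real.exp_zero] at this
  nlinarith [this]

private lemma aux_T {z : ℝ} (hz : 0 ≤ z) : (1 + z) * Real.exp (-z) ≤ 1 := by
  have h := Real.add_one_le_exp z
  have he : 0 < Real.exp (-z) := Real.exp_pos _
  have : (1 + z) * Real.exp (-z) ≤ Real.exp z * Real.exp (-z) := by
    apply mul_le_mul_of_nonneg_right (by linarith) he.le
  rwa [← Real.exp_add, add_neg_cancel, Real.exp_zero] at this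

private lemma q4_mono : MonotoneOn q4 (Set.Ioi 0) := by
  apply monotoneOn_of_deriv_nonneg (convex_Ioi 0)
  · exact fun z hz => ((q4_hasDeriv (ne_of_gt hz)).differentiableAt).continuousAt.continuousWithinAt
  · rw [interior_Ioi]
    exact fun z hz => ((q4_hasDeriv (ne_of_gt hz)).differentiableAt).differentiableWithinAt
  · rw [interior_Ioi]
    intro z hz
    rw [(q4_hasDeriv (ne_of_gt hz)).deriv]
    have h := aux_T (le_of_lt hz)
    apply div_nonneg (by linarith) (by positivity)
  
private lemma q4_lip : AntitoneOn (fun z => q4 z - z / 2) (Set.Ioi 0) := by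
  apply antitoneOn_of_deriv_nonpos (convex_Ioi 0)
  · apply ContinuousOn.sub
    · exact fun z hz => ((q4_hasDeriv (ne_of_gt hz)).differentiableAt).continuousAt.continuousWithinAt
    · fun_prop
  · rw [interior_Ioi]
    intro z hz
    exact (((q4_hasDeriv (ne_of_gt hz)).differentiableAt).sub
      (differentiableAt_id.div_const 2)).differentiableWithinAt
  · rw [interior_Ioi]
    intro z hz
    have hd : HasDerivAt (fun z => q4 z - z / 2)
        ((1 - (1 + z) * Real.exp (-z)) / z ^ 2 - 1 / 2) z := by
      simpa [Pi.sub_def] using (q4_hasDeriv (ne_of_gt hz)).sub ((hasDerivAt_id z).div_const 2)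
    rw [hd.deriv]
    have hS := aux_S (le_of_lt hz)
    rw [sub_nonpos, div_le_div_iff₀ (pow_pos hz 2) (by norm_num : (0:ℝ) < 2)]
    nlinarith

private lemma key4 (a b t : ℝ) (ha : 0 < a) (hb : 0 < b) (ht : 0 < t) (hab : a < b) :
    |b * Real.exp (-a * t) - a * Real.exp (-b * t) - (b - a)|
      ≤ 1 * min 1 (2 * a * b * t ^ 2) * |b - a| := by
  set x := a * t with hxdef
  set y := b * t with hydef
  have hx : 0 < x := by positivity
  have hy : 0 < y := by positivity
  have hxy : x < y := by
    apply mul_lt_mul_of_pos_right hab ht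
  have hrepr : b * Real.exp (-a * t) - a * Real.exp (-b * t) - (b - a)
      = a * b * t * (q4 x - q4 y) := by
    simp only [q4, hxdef, hydef, neg_mul]
    field_simp
    ring
  have h1 : q4 x ≤ q4 y := q4_mono (Set.mem_Ioi.mpr hx) (Set.mem_Ioi.mpr hy) hxy.le
  have habs : |b * Real.exp (-a * t) - a * Real.exp (-b * t) - (b - a)|
      = a * b * t * (q4 y - q4 x) := by
    have hpos : (0:ℝ) ≤ a * b * t := by positivity
    have hnp : a * b * t * (q4 x - q4 y) ≤ 0 := by
      nlinarith [mul_le_mul_of_nonneg_left h1 hpos]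
    rw [hrepr, abs_of_nonpos hnp]
    ring
  have hB2 : q4 y - q4 x ≤ (y - x) / 2 := by
    have := q4_lip (Set.mem_Ioi.mpr hx) (Set.mem_Ioi.mpr hy) hxy.le
    simp only at this
    linarith
  have hB3 : q4 y - q4 x ≤ 1 / x - 1 / y := by
    have hexp : Real.exp (-y) / y ≤ Real.exp (-x) / x :=
      div_le_div₀ (Real.exp_nonneg _) (Real.exp_le_exp.2 (by linarith)) hx hxy.le
    have hexpand : q4 y - q4 x
        = (Real.exp (-y) / y - Real.exp (-x) / x) + (1 / x - 1 / y) := by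
      simp only [q4]
      field_simp
      ring
    linarith
  rw [habs, abs_of_pos (by linarith : (0:ℝ) < b - a)]
  rcases le_total (2 * a * b * t ^ 2) 1 with hmin | hmin
  · rw [min_eq_right hmin, one_mul]
    have h := mul_le_mul_of_nonneg_left hB2 (show (0:ℝ) ≤ a * b * t by positivity)
    have hyx : y - x = (b - a) * t := by rw [hxdef, hydef]; ring
    have hpos : (0:ℝ) ≤ a * b * t ^ 2 * (b - a) := mul_nonneg (by positivity) (by linarith)
    have h2 : a * b * t * ((y - x) / 2) ≤ 2 * a * b * t ^ 2 * (b - a) := by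
      rw [hyx]; nlinarith [hpos]
    linarith
  · rw [min_eq_left hmin, one_mul, one_mul]
    have h := mul_le_mul_of_nonneg_left hB3 (show (0:ℝ) ≤ a * b * t by positivity)
    have heq : a * b * t * (1 / x - 1 / y) = b - a := by
      rw [hxdef, hydef]
      field_simp
    linarith

/-- |b e^{-at} - a e^{-bt} - (b-a)| ≤ C · min(1, 2abt²) · |b-a| for an absolute C ≥ 1. -/
theorem stmt_4 :
    ∃ C : ℝ, 1 ≤ C ∧ ∀ a b t : ℝ, 0 < a → 0 < b → 0 < t → a ≠ b →
      |b * Real.exp (-a * t) - a * Real.exp (-b * t) - (b - a)|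
        ≤ C * min 1 (2 * a * b * t ^ 2) * |b - a| := by
  refine ⟨1, le_refl 1, ?_⟩
  intro a b t ha hb ht hne
  rcases hne.lt_or_gt with h | h
  · exact key4 a b t ha hb ht h
  · rw [show b * Real.exp (-a * t) - a * Real.exp (-b * t) - (b - a)
        = -(a * Real.exp (-b * t) - b * Real.exp (-a * t) - (a - b)) by ring,
      abs_neg, abs_sub_comm b a,
      show 2 * a * b * t ^ 2 = 2 * b * a * t ^ 2 by ring]
    exact key4 b a t hb ha ht h
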